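/- Let ν > 1 and 1/ν + 1/ν² < F < 2, and set H_R := 1/ν² and H_* := (−ν−1+√(8F²ν⁴+ν²+2ν+1)) H_R/(2(ν+1)). Then for every H ≥ H_*, f_{F,H_R}(H) ≥ F²H_R²(1 − H_*) > 0, where f_{F,H_R}(H) := 2(√H_R+1)²H³ − F²H_R(H_R+√H_R+1)H + F²H_R². -/

import Mathlib

open Real

/-- The cubic `f_{F,H_R}(H) := 2(√H_R+1)²H³ − F²H_R(H_R+√H_R+1)H + F²H_R²`. -/
noncomputable def fCubic (F HR H : ℝ) : ℝ :=
  2 * (Real.sqrt HR + 1) ^ 2 * H ^ 3 - F ^ 2 * HR * (HR + Real.sqrt HR + 1) * H + F ^ 2 * HR ^ 2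

/-- In the discontinuous-profile regime, `f_{F,H_R}(H) ≥ F²H_R²(1−H_*) > 0` for all
`H ≥ H_*`. -/
theorem fCubic_pos_of_discont (F nu : ℝ) (hnu : 1 < nu)
    (hFlow : 1 / nu + 1 / nu ^ 2 < F) (hF2 : F < 2) :
    let HR := 1 / nu ^ 2
    let Hstar := (-nu - 1 + Real.sqrt (8 * F ^ 2 * nu ^ 4 + nu ^ 2 + 2 * nu + 1)) * HR /
      (2 * (nu + 1))
    (∀ H : ℝ, Hstar ≤ H → F ^ 2 * HR ^ 2 * (1 - Hstar) ≤ fCubic F HR H) ∧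
      0 < F ^ 2 * HR ^ 2 * (1 - Hstar) := by
  intro HR Hstar
  have hν0 : (0:ℝ) < nu := lt_trans one_pos hnu
  have hν2 : (0:ℝ) < nu ^ 2 := by positivity
  have hHRdef : HR = 1 / nu ^ 2 := rfl
  have hsqrtHR : Real.sqrt HR = 1 / nu := by
    rw [hHRdef, one_div, Real.sqrt_inv, Real.sqrt_sq hν0.le, one_div]
  have hF0 : (0:ℝ) < F := lt_trans (by positivity) hFlow
  set s := Real.sqrt (8 * F ^ 2 * nu ^ 4 + nu ^ 2 + 2 * nu + 1) with hs
  have hsnn : 0 ≤ s := Real.sqrt_nonneg _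
  have hssq : s ^ 2 = 8 * F ^ 2 * nu ^ 4 + nu ^ 2 + 2 * nu + 1 :=
    Real.sq_sqrt (by positivity)
  have hsgt : nu + 1 < s := by
    nlinarith [mul_pos (mul_pos hF0 hF0) (pow_pos hν0 4)]
  have hHs : Hstar = (s - nu - 1) / (2 * nu ^ 2 * (nu + 1)) := by
    show (-nu - 1 + s) * (1 / nu ^ 2) / (2 * (nu + 1)) = _
    field_simp
    ring
  clear_value s HR Hstar
  have hpos : 0 < Hstar := by
    rw [hHs]
    apply div_pos (by linarith) (by positivity)
  -- key identity
  have hkey : 2 * nu ^ 2 * F ^ 2 = (nu + 1) ^ 2 * Hstar * (nu ^ 2 * Hstar + 1) := by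
    rw [hHs]
    field_simp
    nlinarith [hssq]
  have hkey2 : 2 * nu ^ 4 * F ^ 2 = (nu + 1) ^ 2 * (nu ^ 2 * Hstar) * (nu ^ 2 * Hstar + 1) := by
    linear_combination nu ^ 2 * hkey
  have hflow2 : nu + 1 < F * nu ^ 2 := by
    have h1 : 1 / nu + 1 / nu ^ 2 = (nu + 1) / nu ^ 2 := by field_simp
    rw [h1] at hFlow
    exact (div_lt_iff₀ hν2).mp hFlow
  have hy0 : 0 < nu ^ 2 * Hstar := mul_pos hν2 hpos
  -- lower bound: 1 < nu^2 * Hstar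
  have hF4 : (nu + 1) ^ 2 < F ^ 2 * nu ^ 4 := by nlinarith [hflow2]
  have hyy : 2 < (nu ^ 2 * Hstar) * (nu ^ 2 * Hstar + 1) := by
    nlinarith [hkey2, hF4, sq_nonneg (nu + 1)]
  have hy1 : 1 < nu ^ 2 * Hstar := by nlinarith [hyy, hy0]
  -- upper bound: Hstar < 1
  have hub : Hstar < 1 := by
    by_contra h
    push_neg at h
    have hyν : nu ^ 2 ≤ nu ^ 2 * Hstar := le_mul_of_one_le_right hν2.le h
    have hFsq : F ^ 2 < 4 := by
      have h1 : F * F < 2 * 2 := mul_lt_mul'' hF2 hF2 hF0.le hF0.le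
      linarith only [h1]
    have h8 : (nu + 1) ^ 2 * (nu ^ 2 * Hstar) * (nu ^ 2 * Hstar + 1) < 8 * nu ^ 4 := by
      have h2 := mul_lt_mul_of_pos_left hFsq (show (0:ℝ) < 2 * nu ^ 4 by positivity)
      linarith only [h2, hkey2]
    have hmono : 0 ≤ (nu + 1) ^ 2 * ((nu ^ 2 * Hstar - nu ^ 2) * (nu ^ 2 * Hstar + nu ^ 2 + 1)) :=
      mul_nonneg (sq_nonneg _) (mul_nonneg (by linarith) (by positivity))
    have hfac : 0 ≤ nu ^ 2 * ((nu - 1) ^ 2 * (nu ^ 2 + 4 * nu + 1)) :=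
      mul_nonneg hν2.le (mul_nonneg (sq_nonneg _) (by positivity))
    linarith only [h8, hmono, hfac]
  -- condition 1 (scaled by 2ν²)
  have hnusq : nu < nu ^ 2 := by
    have := mul_lt_mul_of_pos_left hnu hν0
    linarith only [this]
  have hA : (nu ^ 2 * Hstar + 1) * (nu ^ 2 + nu + 1) ≤ 12 * nu ^ 2 * (nu ^ 2 * Hstar) := by
    have p1 : 0 ≤ (nu ^ 2 * Hstar - 1) * (11 * nu ^ 2 - nu - 1) :=
      mul_nonneg (by linarith only [hy1]) (by linarith only [hnusq, hnu])
    have p2 : (0:ℝ) ≤ 10 * nu ^ 2 - 2 * nu - 2 := by linarith only [hnusq, hnu]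
    linarith only [p1, p2]
  have cond1 : 2 * nu ^ 2 * F ^ 2 * (nu ^ 2 + nu + 1) ≤ 12 * nu ^ 4 * (nu + 1) ^ 2 * Hstar ^ 2 := by
    calc 2 * nu ^ 2 * F ^ 2 * (nu ^ 2 + nu + 1)
        = ((nu + 1) ^ 2 * Hstar) * ((nu ^ 2 * Hstar + 1) * (nu ^ 2 + nu + 1)) := by
          linear_combination (nu ^ 2 + nu + 1) * hkey
      _ ≤ ((nu + 1) ^ 2 * Hstar) * (12 * nu ^ 2 * (nu ^ 2 * Hstar)) :=
          mul_le_mul_of_nonneg_left hA (by positivity)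
      _ = 12 * nu ^ 4 * (nu + 1) ^ 2 * Hstar ^ 2 := by ring
  -- condition 2 (scaled by 2ν²)
  have hA2 : (nu + 1) * (nu ^ 2 * Hstar + 1) ≤ 4 * nu * (nu ^ 2 * Hstar) := by
    have p1 : 0 ≤ (nu ^ 2 * Hstar - 1) * (3 * nu - 1) :=
      mul_nonneg (by linarith only [hy1]) (by linarith only [hnu])
    linarith only [p1, hnu]
  have cond2 : 2 * nu ^ 2 * F ^ 2 ≤ 4 * nu ^ 3 * (nu + 1) * Hstar ^ 2 := by
    calc 2 * nu ^ 2 * F ^ 2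
        = ((nu + 1) * Hstar) * ((nu + 1) * (nu ^ 2 * Hstar + 1)) := by
          linear_combination hkey
      _ ≤ ((nu + 1) * Hstar) * (4 * nu * (nu ^ 2 * Hstar)) :=
          mul_le_mul_of_nonneg_left hA2 (by positivity)
      _ = 4 * nu ^ 3 * (nu + 1) * Hstar ^ 2 := by ring
  constructor
  · intro H hH
    have h1s : 0 ≤ (H - Hstar) *
        (12 * nu ^ 4 * (nu + 1) ^ 2 * Hstar ^ 2 - 2 * nu ^ 2 * F ^ 2 * (nu ^ 2 + nu + 1)) :=
      mul_nonneg (sub_nonneg.2 hH) (sub_nonneg.2 cond1)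
    have h2s : 0 ≤ 4 * nu ^ 4 * (nu + 1) ^ 2 * ((H - Hstar) ^ 2 * (H + 2 * Hstar)) := by
      have : 0 ≤ H + 2 * Hstar := by linarith only [hH, hpos]
      positivity
    have h3s : 0 ≤ nu * (nu + 1) * Hstar *
        (4 * nu ^ 3 * (nu + 1) * Hstar ^ 2 - 2 * nu ^ 2 * F ^ 2) :=
      mul_nonneg (by positivity) (sub_nonneg.2 cond2)
    have hscaled : 2 * nu ^ 2 * (F ^ 2 * (1 - Hstar)) ≤ 2 * nu ^ 2 *
        (2 * nu ^ 2 * (nu + 1) ^ 2 * H ^ 3 - F ^ 2 * (nu ^ 2 + nu + 1) * H + F ^ 2) := by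
      linarith only [h1s, h2s, h3s]
    have key_poly : F ^ 2 * (1 - Hstar) ≤
        2 * nu ^ 2 * (nu + 1) ^ 2 * H ^ 3 - F ^ 2 * (nu ^ 2 + nu + 1) * H + F ^ 2 :=
      (mul_le_mul_iff_right₀ (by positivity : (0:ℝ) < 2 * nu ^ 2)).mp hscaled
    have hfeq : fCubic F HR H =
        (2 * nu ^ 2 * (nu + 1) ^ 2 * H ^ 3 - F ^ 2 * (nu ^ 2 + nu + 1) * H + F ^ 2) / nu ^ 4 := by
      unfold fCubic
      rw [hsqrtHR, hHRdef]
      field_simp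
      ring
    have hbeq : F ^ 2 * HR ^ 2 * (1 - Hstar) = (F ^ 2 * (1 - Hstar)) / nu ^ 4 := by
      rw [hHRdef]; ring
    rw [hfeq, hbeq]
    gcongr
  · have h1 : 0 < 1 - Hstar := by linarith
    have h2 : 0 < F ^ 2 * HR ^ 2 := by rw [hHRdef]; positivity
    exact mul_pos h2 h1
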